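/- Let E be a complex Banach space, U an open neighborhood of a point P ∈ E, and let S, L, F : E → E satisfy S(F(x)) + L(F(x)) = S(x) for all x ∈ U. Assume that F is continuous at P with F(P) = P and is Fréchet differentiable on U, that S and L are Fréchet differentiable on U with derivative maps Σ := DS and Λ := DL continuous at P, that Λ(x) is invertible for every x ∈ U with x ↦ Λ(x)⁻¹ continuous at P, and that Λ(x)⁻¹ ∘ Σ(x) → 0 in operator norm as x → P. Then P is a locally attracting fixed point of F: there exists ε > 0 such that for every x₀ with ‖x₀ − P‖ < ε the sequence of iterates defined by x_{n+1} = F(x_n) converges to P. -/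

import Mathlib

open Filter Topology Asymptotics

/-- Under the same hypotheses as the derivative statement, `P` is a locally attracting
fixed point of `F`: the iterates starting close enough to `P` converge to `P`. -/
theorem stmt_3 {E : Type*} [NormedAddCommGroup E] [NormedSpace ℂ E] [CompleteSpace E]
    (U : Set E) (hU : IsOpen U) (P : E) (hP : P ∈ U) (S L F : E → E)
    (heq : ∀ x ∈ U, S (F x) + L (F x) = S x)
    (hFc : ContinuousAt F P) (hFP : F P = P)
    (hFd : ∀ x ∈ U, DifferentiableAt ℂ F x)
    (hSd : ∀ x ∈ U, DifferentiableAt ℂ S x)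
    (hLd : ∀ x ∈ U, DifferentiableAt ℂ L x)
    (hSigc : ContinuousAt (fun x => fderiv ℂ S x) P)
    (hLamc : ContinuousAt (fun x => fderiv ℂ L x) P)
    (Λinv : E → (E →L[ℂ] E))
    (hΛinv : ∀ x ∈ U, (fderiv ℂ L x).comp (Λinv x) = ContinuousLinearMap.id ℂ E ∧
      (Λinv x).comp (fderiv ℂ L x) = ContinuousLinearMap.id ℂ E)
    (hΛinvc : ContinuousAt Λinv P)
    (hlim : Tendsto (fun x => (Λinv x).comp (fderiv ℂ S x)) (𝓝 P) (𝓝 0)) :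
    ∃ ε > 0, ∀ x₀ : E, ‖x₀ - P‖ < ε →
      Tendsto (fun n => F^[n] x₀) atTop (𝓝 P) := by
  -- Step A: Σ(P) = 0
  have hcont : ContinuousAt (fun x => (Λinv x).comp (fderiv ℂ S x)) P := by
    have h := Filter.Tendsto.comp ((ContinuousLinearMap.compL ℂ E E E).continuous₂.continuousAt
      (x := (Λinv P, fderiv ℂ S P))) (ContinuousAt.prodMk hΛinvc hSigc)
    exact h
  have h0 : (Λinv P).comp (fderiv ℂ S P) = 0 :=
    tendsto_nhds_unique hcont.tendsto hlim
  have hSP : fderiv ℂ S P = 0 := by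
    have h := congrArg (fun T => (fderiv ℂ L P).comp T) h0
    simpa [← ContinuousLinearMap.comp_assoc, (hΛinv P hP).1] using h
  -- Step B: DF(P) = 0
  have hF' : HasFDerivAt F (fderiv ℂ F P) P := (hFd P hP).hasFDerivAt
  have hS' : HasFDerivAt S (0 : E →L[ℂ] E) P := by
    have := (hSd P hP).hasFDerivAt; rwa [hSP] at this
  have hL' : HasFDerivAt L (fderiv ℂ L P) P := (hLd P hP).hasFDerivAt
  have h1 : HasFDerivAt (fun x => S (F x))
      ((0 : E →L[ℂ] E).comp (fderiv ℂ F P)) P :=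
    HasFDerivAt.comp P (by rw [hFP]; exact hS') hF'
  have h2 : HasFDerivAt (fun x => L (F x))
      ((fderiv ℂ L P).comp (fderiv ℂ F P)) P :=
    HasFDerivAt.comp P (by rw [hFP]; exact hL') hF'
  have h3 : HasFDerivAt (fun x => S x - L (F x))
      ((0 : E →L[ℂ] E) - (fderiv ℂ L P).comp (fderiv ℂ F P)) P := hS'.sub h2
  have hev : (fun x => S (F x)) =ᶠ[𝓝 P] (fun x => S x - L (F x)) := by
    filter_upwards [hU.mem_nhds hP] with x hx
    rw [eq_sub_iff_add_eq]
    exact heq x hx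
  have h4 : HasFDerivAt (fun x => S x - L (F x))
      ((0 : E →L[ℂ] E).comp (fderiv ℂ F P)) P :=
    h1.congr_of_eventuallyEq hev.symm
  have h5 : (fderiv ℂ L P).comp (fderiv ℂ F P) = 0 := by
    have := h4.unique h3
    simpa using this.symm
  have hDF : fderiv ℂ F P = 0 := by
    have h := congrArg (fun T => (Λinv P).comp T) h5
    simpa [← ContinuousLinearMap.comp_assoc, (hΛinv P hP).2] using h
  have hF0 : HasFDerivAt F (0 : E →L[ℂ] E) P := by rwa [hDF] at hF'
  -- Step C: local contraction
  have hlittle : (fun x => F x - P) =o[𝓝 P] (fun x => x - P) := by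
    have := hF0.isLittleO
    simpa [hFP] using this
  have hev2 : ∀ᶠ x in 𝓝 P, ‖F x - P‖ ≤ 1 / 2 * ‖x - P‖ :=
    hlittle.def (by norm_num : (0:ℝ) < 1 / 2)
  obtain ⟨ε, hε, hball⟩ := Metric.eventually_nhds_iff.mp hev2
  refine ⟨ε, hε, fun x₀ hx₀ => ?_⟩
  have key : ∀ n, ‖F^[n] x₀ - P‖ ≤ (1 / 2 : ℝ) ^ n * ‖x₀ - P‖ := by
    intro n
    induction n with
    | zero => simp
    | succ n ih =>
      have hpow : ((1:ℝ)/2) ^ n ≤ 1 :=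
        pow_le_one₀ (by norm_num) (by norm_num)
      have hin : ‖F^[n] x₀ - P‖ < ε := by
        have : ((1:ℝ)/2) ^ n * ‖x₀ - P‖ ≤ ‖x₀ - P‖ := by
          nlinarith [norm_nonneg (x₀ - P)]
        linarith
      rw [Function.iterate_succ_apply']
      calc ‖F (F^[n] x₀) - P‖ ≤ 1 / 2 * ‖F^[n] x₀ - P‖ := by
            apply hball; rwa [dist_eq_norm]
        _ ≤ 1 / 2 * ((1/2 : ℝ) ^ n * ‖x₀ - P‖) := by linarith
        _ = (1/2 : ℝ) ^ (n+1) * ‖x₀ - P‖ := by ring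
  have hnorm : Tendsto (fun n => ‖F^[n] x₀ - P‖) atTop (𝓝 0) := by
    refine squeeze_zero (fun n => norm_nonneg _) key ?_
    have := (tendsto_pow_atTop_nhds_zero_of_lt_one
      (by norm_num : (0:ℝ) ≤ 1/2) (by norm_num : (1/2 : ℝ) < 1)).mul_const ‖x₀ - P‖
    simpa using this
  exact tendsto_iff_norm_sub_tendsto_zero.mpr hnorm
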